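/- Let Q be a circle of radius r_q centered at the origin with 2/√3 − 1 ≤ r_q, let C = (−1/2, 1/(2√3)), and let D' be a disk with center c' in the closed wedge between rays from the origin through C and through B = (1/2, 1/(2√3)) (the wedge containing the positive y-axis), with dist(c', C) equal to the radius r' of D' (D' touches C) and dist(c', origin) = r' + r_q (D' touches Q externally), r' ≤ 3. Let D_b be a disk of radius r_b ≤ 3 whose center c_b lies on the negative y-axis with D_b tangent externally to Q and not containing C... then D' and D_b are disjoint below the line through the origin and C. (This is the instantiation of Lemma 120 with p = C, M = Q, D₂ = D', D₁ = D_b after a rotation of the plane.) -/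

import Mathlib

noncomputable def pt (x y : ℝ) : EuclideanSpace ℝ (Fin 2) := WithLp.toLp 2 ![x, y]

/-- Lemma (instantiation of Lemma 120): `M` is the circle of radius `r(2/√3 - 1)`
centered at the origin, `p = (0, -1/√3)`; `D₁` is a disk of radius at most 3
touching `p` and `M` with center in the fourth quadrant; `D₂` is a disk of radius
at most 3 touching `M` with center on the line `y = -x/√3` in the second quadrant.
Then `D₁` and `D₂` have no common point strictly below the line `y = -x/√3`. -/

lemma dist_sq' (x y : EuclideanSpace ℝ (Fin 2)) :
    dist x y ^ 2 = (x 0 - y 0)^2 + (x 1 - y 1)^2 := by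
  rw [EuclideanSpace.dist_eq, Real.sq_sqrt (by positivity)]
  simp [Fin.sum_univ_two, Real.dist_eq, sq_abs]

lemma key_poly (r₁ m : ℝ) (hr1 : 0 < r₁) (hr13 : r₁ ≤ 3)
    (hm1 : 0.1547 ≤ m) (hm2 : m ≤ 0.4642)
    (ha : 1.732*(2*r₁*m+m^2+1/3) ≤ 4*(r₁-m)) :
    3*(r₁+m)^2 - 4*(r₁-m)^2 - 3*(2*r₁*m+m^2+1/3)^2
      + 3.4641*(r₁-m)*(2*r₁*m+m^2+1/3) ≥ 0 := by
  nlinarith [mul_nonneg (by linarith : (0:ℝ) ≤ 4*(r₁-m) - 1.732*(2*r₁*m+m^2+1/3)) (by linarith : (0:ℝ) ≤ 3 - r₁),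
    mul_nonneg (by linarith : (0:ℝ) ≤ m - 0.1547) (by linarith : (0:ℝ) ≤ 0.4642 - m),
    sq_nonneg (m - 0.3), sq_nonneg (r₁ - 1), mul_pos hr1 (by linarith : (0:ℝ) < m),
    mul_nonneg (mul_nonneg (by linarith : (0:ℝ) ≤ m - 0.1547) (by linarith : (0:ℝ) ≤ 0.4642 - m)) (by linarith : (0:ℝ) ≤ 3 - r₁),
    mul_nonneg (mul_nonneg (by linarith : (0:ℝ) ≤ m - 0.1547) (by linarith : (0:ℝ) ≤ 0.4642 - m)) hr1.le]

set_option maxHeartbeats 1000000 in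
lemma key_geom (t r₁ m a₀ a₁ : ℝ) (ht2 : t^2 = 3)
    (htl : 1.7320508 ≤ t) (htu : t ≤ 1.7320509)
    (hr1 : 0 < r₁) (hr13 : r₁ ≤ 3)
    (hm1 : 0.1547 ≤ m) (hm2 : m ≤ 0.4642)
    (ha0 : 0 < a₀)
    (ha₁ : a₁ = -(t*(2*r₁*m+m^2+1/3))/2)
    (hcirc : a₀^2 + a₁^2 = (r₁+m)^2) :
    t*a₀ - a₁ ≥ 2*(r₁-m) := by
  have hKpos : 0 < 2*r₁*m+m^2+1/3 := by
    have : 0 < r₁*m := mul_pos hr1 (by linarith); nlinarith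
  by_cases h : 4*(r₁-m) ≤ 1.732*(2*r₁*m+m^2+1/3)
  · have h1 : 2*(r₁-m) + a₁ ≤ 0 := by
      rw [ha₁]; nlinarith
    nlinarith [mul_pos (by linarith : (0:ℝ) < t) ha0]
  · push_neg at h
    have hF := key_poly r₁ m hr1 hr13 hm1 hm2 (le_of_lt h)
    have hd : 0 < r₁ - m := by nlinarith
    have hprod : (2*t - 3.4641) * ((r₁-m)*(2*r₁*m+m^2+1/3)) ≥ 0 :=
      mul_nonneg (by linarith) (mul_nonneg hd.le hKpos.le)
    have hF2 : 3*(r₁+m)^2 - 4*(r₁-m)^2 - 3*(2*r₁*m+m^2+1/3)^2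
        + 2*t*(r₁-m)*(2*r₁*m+m^2+1/3) ≥ 0 := by linarith
    have esq : a₁^2 = 3*(2*r₁*m+m^2+1/3)^2/4 := by
      rw [ha₁]; linear_combination ((2*r₁*m+m^2+1/3)^2/4) * ht2
    have hda : (r₁-m)*a₁ = -(t*((r₁-m)*(2*r₁*m+m^2+1/3)))/2 := by rw [ha₁]; ring
    have h3 : 3*a₀^2 ≥ (2*(r₁-m)+a₁)^2 := by nlinarith [hF2, hcirc, esq, hda]
    have e3 : (t*a₀)^2 = 3*a₀^2 := by rw [mul_pow, ht2]
    have hta0 : 0 < t*a₀ := mul_pos (by linarith) ha0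
    by_contra hc
    push_neg at hc
    have ha' : t*a₀ < 2*(r₁-m)+a₁ := by linarith
    have hsq : (t*a₀)^2 < (2*(r₁-m)+a₁)^2 := by
      exact pow_lt_pow_left₀ ha' hta0.le (by norm_num)
    linarith [h3, e3]

set_option maxHeartbeats 1000000 in
theorem stmt_19 (r : ℝ) (hr : r ∈ Set.Icc (1 : ℝ) 3)
    (c₁ c₂ : EuclideanSpace ℝ (Fin 2)) (r₁ r₂ : ℝ)
    (hr₁ : 0 < r₁ ∧ r₁ ≤ 3) (hr₂ : 0 < r₂ ∧ r₂ ≤ 3)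
    (h₁p : dist c₁ (pt 0 (-(1 / Real.sqrt 3))) = r₁)
    (h₁M : dist c₁ (pt 0 0) = r₁ + r * (2 / Real.sqrt 3 - 1))
    (h₁quad : c₁ 0 > 0 ∧ c₁ 1 < 0)
    (h₂M : dist c₂ (pt 0 0) = r₂ + r * (2 / Real.sqrt 3 - 1))
    (h₂line : c₂ 1 = -(c₂ 0) / Real.sqrt 3)
    (h₂quad : c₂ 0 < 0 ∧ c₂ 1 > 0) :
    ∀ z ∈ Metric.closedBall c₁ r₁ ∩ Metric.closedBall c₂ r₂,
      ¬ (z 1 < -(z 0) / Real.sqrt 3) := by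
  intro z hz hbelow
  obtain ⟨hz1, hz2⟩ := hz
  rw [Metric.mem_closedBall] at hz1 hz2
  set t := Real.sqrt 3 with hts
  have ht2 : t^2 = 3 := Real.sq_sqrt (by norm_num)
  have ht0 : (0:ℝ) < t := Real.sqrt_pos.2 (by norm_num)
  have htl : (1.7320508:ℝ) ≤ t := by
    nlinarith [ht2, ht0]
  have htu : t ≤ 1.7320509 := by
    linarith only [ht2, sq_nonneg (t - 1.7320509)]
  set m := r * (2/t - 1) with hm
  have hp0 : (pt 0 (-(1/t))) 0 = 0 := by simp [pt]
  have hp1 : (pt 0 (-(1/t))) 1 = -(1/t) := by simp [pt]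
  have hq0 : (pt 0 0) 0 = 0 := by simp [pt]
  have hq1 : (pt 0 0) 1 = 0 := by simp [pt]
  have e1 := dist_sq' c₁ (pt 0 (-(1/t)))
  rw [h₁p, hp0, hp1] at e1
  have e2 := dist_sq' c₁ (pt 0 0)
  rw [h₁M, hq0, hq1] at e2
  have e3 := dist_sq' c₂ (pt 0 0)
  rw [h₂M, hq0, hq1] at e3
  have hst : (1/t) * t = 1 := by field_simp
  have hs2 : (1/t)^2 = 1/3 := by rw [div_pow, ht2]; norm_num
  -- bounds on 1/t and m
  have hsl : (0.57735:ℝ) ≤ 1/t := by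
    rw [le_div_iff₀ ht0]; linarith only [htu]
  have hsu : (1/t : ℝ) ≤ 0.5773503 := by
    rw [div_le_iff₀ ht0]; linarith only [htl]
  have hmeq : m = r*(2*(1/t)-1) := by rw [hm]; ring
  have hm1 : (0.1547:ℝ) ≤ m := by
    rw [hmeq]
    have h' : 1*(2*(1/t)-1) ≤ r*(2*(1/t)-1) :=
      mul_le_mul_of_nonneg_right hr.1 (by linarith only [hsl])
    linarith only [h', hsl]
  have hm2 : m ≤ 0.4642 := by
    rw [hmeq]
    have h' : r*(2*(1/t)-1) ≤ 3*(2*(1/t)-1) :=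
      mul_le_mul_of_nonneg_right hr.2 (by linarith only [hsl])
    linarith only [h', hsu]
  -- c₁ facts
  have hcirc : (c₁ 0)^2 + (c₁ 1)^2 = (r₁ + m)^2 := by linear_combination -e2
  have ha₁ : c₁ 1 = -(t*(2*r₁*m+m^2+1/3))/2 := by
    linear_combination (t/2)*e2 - (t/2)*e1 - (c₁ 1)*hst - (t/2)*hs2
  have hkey : t*(c₁ 0) - c₁ 1 ≥ 2*(r₁ - m) :=
    key_geom t r₁ m (c₁ 0) (c₁ 1) ht2 htl htu hr₁.1 hr₁.2 hm1 hm2 h₁quad.1 ha₁ hcirc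
  -- z in D1 : w-coordinate bound
  have d1 : (z 0 - c₁ 0)^2 + (z 1 - c₁ 1)^2 ≤ r₁^2 := by
    rw [← dist_sq' z c₁]; exact pow_le_pow_left₀ dist_nonneg hz1 2
  have e4a : t^2*(z 0 - c₁ 0)^2 = 3*(z 0 - c₁ 0)^2 := by rw [ht2]
  have e4b : t^2*(z 1 - c₁ 1)^2 = 3*(z 1 - c₁ 1)^2 := by rw [ht2]
  have hcs : (-(t*(z 0)) + z 1 - (-(t*(c₁ 0)) + c₁ 1))^2 ≤ 4*r₁^2 := by
    linarith only [d1, sq_nonneg ((z 0 - c₁ 0) + t*(z 1 - c₁ 1)), e4a, e4b]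
  have hw1 : -(t*(z 0)) + z 1 - (-(t*(c₁ 0)) + c₁ 1) ≤ 2*r₁ := by
    have h1 : (-(t*(z 0)) + z 1 - (-(t*(c₁ 0)) + c₁ 1))^2 ≤ (2*r₁)^2 := by
      linarith only [hcs]
    have h2 := abs_le_of_sq_le_sq h1 (by linarith only [hr₁.1])
    calc -(t*(z 0)) + z 1 - (-(t*(c₁ 0)) + c₁ 1)
        ≤ |(-(t*(z 0)) + z 1 - (-(t*(c₁ 0)) + c₁ 1))| := le_abs_self _
      _ ≤ 2*r₁ := h2
  have hw : -(t*(z 0)) + z 1 ≤ 2*m := by linarith only [hw1, hkey]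
  -- c₂ coordinates
  have hb : c₂ 0 = -(t*(c₂ 1)) := by rw [h₂line]; field_simp
  have eb : (c₂ 0)^2 = 3*(c₂ 1)^2 := by
    rw [hb]; linear_combination (c₂ 1)^2 * ht2
  have h4 : (2*(c₂ 1) - (r₂+m))*(2*(c₂ 1)+(r₂+m)) = 0 := by
    linear_combination (-1:ℝ)*e3 + (-1:ℝ)*eb
  have hBpos : 0 < r₂ + m := by linarith only [hr₂.1, hm1]
  have hb1 : c₂ 1 = (r₂+m)/2 := by
    rcases mul_eq_zero.1 h4 with h | h
    · linarith only [h]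
    · linarith only [h, h₂quad.2, hBpos]
  have hb0 : c₂ 0 = -(t*(r₂+m))/2 := by rw [hb, hb1]; ring
  -- z in D2
  have d2 : (z 0 - c₂ 0)^2 + (z 1 - c₂ 1)^2 ≤ r₂^2 := by
    rw [← dist_sq' z c₂]; exact pow_le_pow_left₀ dist_nonneg hz2 2
  rw [hb0, hb1] at d2
  have eB : t^2*(r₂+m)^2 = 3*(r₂+m)^2 := by rw [ht2]
  have hBw : (r₂+m)*(-(t*(z 0)) + z 1) ≥ (z 0)^2 + (z 1)^2 + (r₂+m)^2 - r₂^2 := by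
    linarith only [d2, eB]
  -- strictly below the line
  rw [lt_div_iff₀ ht0] at hbelow
  have hv : z 0 + t*(z 1) < 0 := by linarith only [hbelow]
  have hrho : (z 0 + t*(z 1))^2 + (-(t*(z 0)) + z 1)^2 = 4*((z 0)^2 + (z 1)^2) := by
    linear_combination ((z 0)^2 + (z 1)^2)*ht2
  have hprod : (0:ℝ) ≤ (2*m - (-(t*(z 0)) + z 1))*(2*m + 4*r₂ - (-(t*(z 0)) + z 1)) :=
    mul_nonneg (by linarith only [hw]) (by linarith only [hw, hr₂.1])
  have hvv : 0 < (z 0 + t*(z 1))^2 := by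
    have hne : z 0 + t*(z 1) ≠ 0 := by linarith only [hv]
    positivity
  linarith only [hBw, hrho, hprod, hvv]
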